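/- If G ≲ H for well-tempered scoring games G, H (meaning L(G+X) ≤ L(H+X) and R(G+X) ≤ R(H+X) for every well-tempered game X), then G and H have the same parity: π(G) = π(H). -/

import Mathlib

/-- Well-tempered scoring game trees: an integer (final score) or a position
with lists of Left and Right options. -/
inductive WT : Type where
  | int : ℤ → WT
  | node : List WT → List WT → WT

namespace WT

/-- Left options. -/
def lopts : WT → List WT
  | int _ => []
  | node L _ => L

/-- Right options. -/
def ropts : WT → List WT
  | int _ => []
  | node _ R => R

theorem sizeOf_lt_of_mem_lopts : ∀ {G g : WT}, g ∈ G.lopts → sizeOf g < sizeOf G := by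
  intro G g h
  cases G with
  | int n => simp [lopts] at h
  | node L R =>
    simp only [lopts] at h
    have h1 := List.sizeOf_lt_of_mem h
    have h2 : sizeOf (WT.node L R) = 1 + sizeOf L + sizeOf R := by simp
    omega

theorem sizeOf_lt_of_mem_ropts : ∀ {G g : WT}, g ∈ G.ropts → sizeOf g < sizeOf G := by
  intro G g h
  cases G with
  | int n => simp [ropts] at h
  | node L R =>
    simp only [ropts] at h
    have h1 := List.sizeOf_lt_of_mem h
    have h2 : sizeOf (WT.node L R) = 1 + sizeOf L + sizeOf R := by simp
    omega

/-- Disjunctive sum of two games. -/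
def add (G H : WT) : WT :=
  match G, H with
  | int m, int n => int (m + n)
  | G, H =>
    node ((G.lopts.attach.map fun g => add g.1 H) ++ (H.lopts.attach.map fun h => add G h.1))
         ((G.ropts.attach.map fun g => add g.1 H) ++ (H.ropts.attach.map fun h => add G h.1))
termination_by sizeOf G + sizeOf H
decreasing_by
  all_goals
    first
      | (have := sizeOf_lt_of_mem_lopts g.2; omega)
      | (have := sizeOf_lt_of_mem_lopts h.2; omega)
      | (have := sizeOf_lt_of_mem_ropts g.2; omega)
      | (have := sizeOf_lt_of_mem_ropts h.2; omega)

/-- Negation of a game: swap players and negate scores. -/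
def neg : WT → WT
  | int n => int (-n)
  | node L R =>
    node ((WT.node L R).ropts.attach.map fun g => neg g.1)
         ((WT.node L R).lopts.attach.map fun g => neg g.1)
termination_by G => sizeOf G
decreasing_by
  all_goals
    first
      | exact sizeOf_lt_of_mem_lopts g.2
      | exact sizeOf_lt_of_mem_ropts g.2

def lmax : List ℤ → ℤ
  | [] => 0
  | x :: xs => xs.foldl max x

def lmin : List ℤ → ℤ
  | [] => 0
  | x :: xs => xs.foldl min x

/-- The pair (left outcome, right outcome). -/
def out : WT → ℤ × ℤ
  | int n => (n, n)
  | node L R =>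
    (lmax ((WT.node L R).lopts.attach.map fun g => (out g.1).2),
     lmin ((WT.node L R).ropts.attach.map fun g => (out g.1).1))
termination_by G => sizeOf G
decreasing_by
  all_goals
    first
      | exact sizeOf_lt_of_mem_lopts g.2
      | exact sizeOf_lt_of_mem_ropts g.2

/-- Left outcome L(G): optimal score when Left moves first. -/
def Lout (G : WT) : ℤ := G.out.1

/-- Right outcome R(G): optimal score when Right moves first. -/
def Rout (G : WT) : ℤ := G.out.2

/-- `IsWT G p` : `G` is a well-tempered game of parity `p`
(`false` = even-tempered, `true` = odd-tempered). -/
inductive IsWT : WT → Bool → Prop where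
  | int (n : ℤ) : IsWT (WT.int n) false
  | node {L R : List WT} {p : Bool} (hL : L ≠ []) (hR : R ≠ [])
      (hLp : ∀ g ∈ L, IsWT g p) (hRp : ∀ g ∈ R, IsWT g p) :
      IsWT (WT.node L R) (!p)

/-- `G` is a well-tempered game (of some parity). -/
def Wt (G : WT) : Prop := ∃ p, IsWT G p

/-- Parity, computed structurally (`false` = even-tempered, `true` = odd-tempered;
agrees with `IsWT` on well-tempered games). -/
def par : WT → Bool
  | int _ => false
  | node [] _ => true
  | node (g :: _) _ => !(par g)

/-- Final score under optimal play when Left moves last. -/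
def Lf (G : WT) : ℤ := if G.par then G.Lout else G.Rout

/-- Final score under optimal play when Right moves last. -/
def Rf (G : WT) : ℤ := if G.par then G.Rout else G.Lout

/-- `G ≲ H` : for every well-tempered `X`, `L(G+X) ≤ L(H+X)` and `R(G+X) ≤ R(H+X)`. -/
def Le (G H : WT) : Prop :=
  ∀ X : WT, X.Wt → (G.add X).Lout ≤ (H.add X).Lout ∧ (G.add X).Rout ≤ (H.add X).Rout

/-- `G ≳ H`. -/
def Ge (G H : WT) : Prop := Le H G

/-- `G ≈ H` : equivalence of scoring games. -/
def Equiv (G H : WT) : Prop :=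
  ∀ X : WT, X.Wt → (G.add X).Lout = (H.add X).Lout ∧ (G.add X).Rout = (H.add X).Rout

/-- `G` and `H` are well-tempered with the same parity. -/
def SamePar (G H : WT) : Prop := ∃ p, IsWT G p ∧ IsWT H p

/-- `G` takes values in `S`: every integer subgame lies in `S`. -/
inductive Valued (S : Set ℤ) : WT → Prop where
  | int {n : ℤ} : n ∈ S → Valued S (WT.int n)
  | node {L R : List WT} : (∀ g ∈ L, Valued S g) → (∀ g ∈ R, Valued S g) →
      Valued S (WT.node L R)

/-- `Subgame H G` : `H` is a subgame of `G`. -/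
inductive Subgame : WT → WT → Prop where
  | refl (G : WT) : Subgame G G
  | left {H G' : WT} {L R : List WT} : G' ∈ L → Subgame H G' → Subgame H (WT.node L R)
  | right {H G' : WT} {L R : List WT} : G' ∈ R → Subgame H G' → Subgame H (WT.node L R)

/-- `gap G p` : supremum of `R(H) - L(H)` over subgames `H` of `G` of parity `p`
(as an element of `WithBot ℤ`; the supremum of the empty set is `⊥ = -∞`). -/
noncomputable def gap (G : WT) (p : Bool) : WithBot ℤ :=
  sSup {x : WithBot ℤ | ∃ H : WT, Subgame H G ∧ IsWT H p ∧ x = ((H.Rout - H.Lout : ℤ) : WithBot ℤ)}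

/-- Heating by `t`. -/
def heat (t : ℤ) : WT → WT
  | int n => int n
  | node L R =>
    node ((WT.node L R).lopts.attach.map fun g => (WT.int t).add (heat t g.1))
         ((WT.node L R).ropts.attach.map fun g => (WT.int (-t)).add (heat t g.1))
termination_by G => sizeOf G
decreasing_by
  all_goals
    first
      | exact sizeOf_lt_of_mem_lopts g.2
      | exact sizeOf_lt_of_mem_ropts g.2

end WT

namespace WT

/-! ### folds -/

private theorem foldl_max_le_iff (xs : List ℤ) : ∀ (x c : ℤ),
    xs.foldl max x ≤ c ↔ x ≤ c ∧ ∀ a ∈ xs, a ≤ c := by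
  induction xs with
  | nil => intro x c; simp
  | cons y ys ih =>
    intro x c
    simp only [List.foldl_cons, ih, max_le_iff, List.mem_cons]
    constructor
    · rintro ⟨⟨h1, h2⟩, h3⟩
      exact ⟨h1, fun a ha => ha.elim (fun e => e ▸ h2) (h3 a)⟩
    · rintro ⟨h1, h2⟩
      exact ⟨⟨h1, h2 y (Or.inl rfl)⟩, fun a ha => h2 a (Or.inr ha)⟩

private theorem le_foldl_min_iff (xs : List ℤ) : ∀ (x c : ℤ),
    c ≤ xs.foldl min x ↔ c ≤ x ∧ ∀ a ∈ xs, c ≤ a := by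
  induction xs with
  | nil => intro x c; simp
  | cons y ys ih =>
    intro x c
    simp only [List.foldl_cons, ih, le_min_iff, List.mem_cons]
    constructor
    · rintro ⟨⟨h1, h2⟩, h3⟩
      exact ⟨h1, fun a ha => ha.elim (fun e => e ▸ h2) (h3 a)⟩
    · rintro ⟨h1, h2⟩
      exact ⟨⟨h1, h2 y (Or.inl rfl)⟩, fun a ha => h2 a (Or.inr ha)⟩

theorem le_lmax {l : List ℤ} {a : ℤ} (h : a ∈ l) : a ≤ lmax l := by
  cases l with
  | nil => cases h
  | cons x xs =>
    have hx : xs.foldl max x ≤ lmax (x :: xs) := le_of_eq rfl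
    rw [foldl_max_le_iff] at hx
    rcases List.mem_cons.mp h with rfl | h
    · exact hx.1
    · exact hx.2 a h

theorem lmax_le {l : List ℤ} (h : l ≠ []) {c : ℤ} (hc : ∀ a ∈ l, a ≤ c) : lmax l ≤ c := by
  cases l with
  | nil => exact absurd rfl h
  | cons x xs =>
    show xs.foldl max x ≤ c
    rw [foldl_max_le_iff]
    exact ⟨hc x (List.mem_cons_self), fun a ha => hc a (List.mem_cons_of_mem _ ha)⟩

theorem lmin_le {l : List ℤ} {a : ℤ} (h : a ∈ l) : lmin l ≤ a := by
  cases l with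
  | nil => cases h
  | cons x xs =>
    have hx : lmin (x :: xs) ≤ xs.foldl min x := le_of_eq rfl
    rw [le_foldl_min_iff] at hx
    rcases List.mem_cons.mp h with rfl | h
    · exact hx.1
    · exact hx.2 a h

theorem le_lmin {l : List ℤ} (h : l ≠ []) {c : ℤ} (hc : ∀ a ∈ l, c ≤ a) : c ≤ lmin l := by
  cases l with
  | nil => exact absurd rfl h
  | cons x xs =>
    show c ≤ xs.foldl min x
    rw [le_foldl_min_iff]
    exact ⟨hc x (List.mem_cons_self), fun a ha => hc a (List.mem_cons_of_mem _ ha)⟩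

private theorem foldl_max_add (n : ℤ) : ∀ (xs : List ℤ) (x : ℤ),
    (xs.map (· + n)).foldl max (x + n) = xs.foldl max x + n := by
  intro xs
  induction xs with
  | nil => intro x; rfl
  | cons y ys ih =>
    intro x
    rw [List.map_cons, List.foldl_cons, List.foldl_cons, max_add_add_right]
    exact ih _

private theorem foldl_min_add (n : ℤ) : ∀ (xs : List ℤ) (x : ℤ),
    (xs.map (· + n)).foldl min (x + n) = xs.foldl min x + n := by
  intro xs
  induction xs with
  | nil => intro x; rfl
  | cons y ys ih =>
    intro x
    rw [List.map_cons, List.foldl_cons, List.foldl_cons, min_add_add_right]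
    exact ih _

theorem lmax_map_add {l : List ℤ} (h : l ≠ []) (n : ℤ) : lmax (l.map (· + n)) = lmax l + n := by
  cases l with
  | nil => exact absurd rfl h
  | cons x xs => exact foldl_max_add n xs x

theorem lmin_map_add {l : List ℤ} (h : l ≠ []) (n : ℤ) : lmin (l.map (· + n)) = lmin l + n := by
  cases l with
  | nil => exact absurd rfl h
  | cons x xs => exact foldl_min_add n xs x

/-! ### unfolding lemmas -/

theorem add_int_int (m n : ℤ) : add (int m) (int n) = int (m + n) := by rw [add]

theorem add_node_int (L R : List WT) (n : ℤ) :
    add (node L R) (int n) = node (L.map fun g => g.add (int n)) (R.map fun g => g.add (int n)) := by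
  rw [add]
  · simp [lopts, ropts]
  · intro m k hm hk; cases hm

theorem add_int_node (m : ℤ) (l r : List WT) :
    add (int m) (node l r) = node (l.map fun h => (int m).add h) (r.map fun h => (int m).add h) := by
  rw [add]
  · simp [lopts, ropts]
  · intro a k ha hk; cases hk

theorem add_node_node (L R l r : List WT) :
    add (node L R) (node l r) =
      node ((L.map fun g => g.add (node l r)) ++ (l.map fun h => (node L R).add h))
           ((R.map fun g => g.add (node l r)) ++ (r.map fun h => (node L R).add h)) := by
  rw [add]
  · simp [lopts, ropts]
  · intro m n hm hn; cases hm

theorem out_node (L R : List WT) :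
    out (node L R) = (lmax (L.map fun g => (out g).2), lmin (R.map fun g => (out g).1)) := by
  rw [out]
  simp [lopts, ropts]

/-! ### bound on scores -/

private theorem le_foldr_max {l : List ℤ} {a : ℤ} (h : a ∈ l) : a ≤ l.foldr max 0 := by
  induction l with
  | nil => cases h
  | cons x xs ih =>
    rcases List.mem_cons.mp h with rfl | h
    · exact le_max_left _ _
    · exact le_trans (ih h) (le_max_right _ _)

private theorem foldr_max_nonneg (l : List ℤ) : 0 ≤ l.foldr max 0 := by
  induction l with
  | nil => exact le_rfl
  | cons x xs ih => exact le_trans ih (le_max_right _ _)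

/-- Bound on all integer leaves of a game. -/
def bnd : WT → ℤ
  | int n => |n|
  | node L R =>
      max (((WT.node L R).lopts.attach.map fun g => bnd g.1).foldr max 0)
          (((WT.node L R).ropts.attach.map fun g => bnd g.1).foldr max 0)
termination_by G => sizeOf G
decreasing_by
  all_goals
    first
      | exact sizeOf_lt_of_mem_lopts g.2
      | exact sizeOf_lt_of_mem_ropts g.2

theorem bnd_node (L R : List WT) :
    bnd (node L R) = max ((L.map bnd).foldr max 0) ((R.map bnd).foldr max 0) := by
  rw [bnd]; simp [lopts, ropts]

theorem bnd_int (n : ℤ) : bnd (int n) = |n| := by rw [bnd]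

theorem bnd_nonneg : ∀ G : WT, 0 ≤ bnd G
  | int n => by rw [bnd_int]; exact abs_nonneg n
  | node L R => by
      rw [bnd_node]
      exact le_trans (foldr_max_nonneg _) (le_max_left _ _)

theorem bnd_left {L R : List WT} {g : WT} (h : g ∈ L) : bnd g ≤ bnd (node L R) := by
  rw [bnd_node]
  exact le_trans (le_foldr_max (List.mem_map_of_mem (f := bnd) h)) (le_max_left _ _)

theorem bnd_right {L R : List WT} {g : WT} (h : g ∈ R) : bnd g ≤ bnd (node L R) := by
  rw [bnd_node]
  exact le_trans (le_foldr_max (List.mem_map_of_mem (f := bnd) h)) (le_max_right _ _)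

theorem out_bnd : ∀ G : WT,
    (-bnd G ≤ (out G).1 ∧ (out G).1 ≤ bnd G) ∧ (-bnd G ≤ (out G).2 ∧ (out G).2 ≤ bnd G)
  | int n => by
      rw [out]
      have h1 : n ≤ |n| := le_abs_self n
      have h2 : -n ≤ |n| := neg_le_abs n
      show (-(bnd (int n)) ≤ n ∧ n ≤ bnd (int n)) ∧ (-(bnd (int n)) ≤ n ∧ n ≤ bnd (int n))
      rw [show bnd (int n) = |n| from by rw [bnd]]
      omega
  | node L R => by
      rw [out_node]
      have hb := bnd_nonneg (node L R)
      constructor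
      · simp only
        cases hL : L with
        | nil => subst hL; simp [lmax]; omega
        | cons x xs =>
          subst hL
          constructor
          · refine le_trans ?_ (le_lmax (l := (x :: xs).map fun g => (out g).2)
              (List.mem_map_of_mem (List.mem_cons_self)))
            have h1 := (out_bnd x).2.1
            have h2 := bnd_left (R := R) (List.mem_cons_self (a := x) (l := xs))
            omega
          · refine lmax_le (by simp) ?_
            intro a ha
            rcases List.mem_map.mp ha with ⟨g, hg, rfl⟩
            have h1 := (out_bnd g).2.2
            have h2 := bnd_left (R := R) hg
            omega
      · simp only
        cases hR : R with
        | nil => subst hR; simp [lmin]; omega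
        | cons x xs =>
          subst hR
          constructor
          · refine le_lmin (by simp) ?_
            intro a ha
            rcases List.mem_map.mp ha with ⟨g, hg, rfl⟩
            have h1 := (out_bnd g).1.1
            have h2 := bnd_right (L := L) hg
            omega
          · refine le_trans (lmin_le (l := (x :: xs).map fun g => (out g).1)
              (List.mem_map_of_mem (List.mem_cons_self))) ?_
            have h1 := (out_bnd x).1.2
            have h2 := bnd_right (L := L) (List.mem_cons_self (a := x) (l := xs))
            omega
termination_by G => sizeOf G
decreasing_by
  all_goals
    first
      | exact sizeOf_lt_of_mem_lopts (by simpa [lopts] using hg)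
      | exact sizeOf_lt_of_mem_ropts (by simpa [ropts] using hg)
      | exact sizeOf_lt_of_mem_lopts (show x ∈ lopts (node (x :: xs) R) from List.mem_cons_self)
      | exact sizeOf_lt_of_mem_ropts (show x ∈ ropts (node L (x :: xs)) from List.mem_cons_self)

end WT

namespace WT

theorem out_add_int : ∀ {K : WT} {p : Bool}, IsWT K p → ∀ n : ℤ,
    (out (K.add (int n))).1 = (out K).1 + n ∧ (out (K.add (int n))).2 = (out K).2 + n := by
  intro K p h
  induction h with
  | int m => intro n; rw [add_int_int, out, out]; exact ⟨rfl, rfl⟩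
  | @node L R p hL hR hLp hRp ihL ihR =>
    intro n
    rw [add_node_int, out_node, out_node]
    simp only [List.map_map]
    constructor
    · have he : (L.map fun g => (out (g.add (int n))).2) = (L.map fun g => (out g).2).map (· + n) := by
        rw [List.map_map]
        refine List.map_congr_left ?_
        intro g hg
        exact (ihL g hg n).2
      have : (L.map ((fun g => (out g).2) ∘ fun g => g.add (int n))) =
          (L.map fun g => (out (g.add (int n))).2) := rfl
      rw [this, he, lmax_map_add (by simpa using hL)]
    · have he : (R.map fun g => (out (g.add (int n))).1) = (R.map fun g => (out g).1).map (· + n) := by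
        rw [List.map_map]
        refine List.map_congr_left ?_
        intro g hg
        exact (ihR g hg n).1
      have : (R.map ((fun g => (out g).1) ∘ fun g => g.add (int n))) =
          (R.map fun g => (out (g.add (int n))).1) := rfl
      rw [this, he, lmin_map_add (by simpa using hR)]

/-- The switch `{-N | N}`. -/
def sw (N : ℤ) : WT := node [int (-N)] [int N]

theorem isWT_sw (N : ℤ) : IsWT (sw N) true := by
  have : IsWT (node [int (-N)] [int N]) (!false) :=
    IsWT.node (by simp) (by simp)
      (fun g hg => by simp at hg; subst hg; exact IsWT.int _)
      (fun g hg => by simp at hg; subst hg; exact IsWT.int _)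
  simpa [sw] using this

theorem key {M N : ℤ} (hMN : M < N) : ∀ {K : WT} {p : Bool}, IsWT K p → bnd K ≤ M →
    (p = true → N - M ≤ (out (K.add (sw N))).1 ∧ (out (K.add (sw N))).2 ≤ M - N) ∧
    (p = false → (out (K.add (sw N))).1 ≤ M - N ∧ N - M ≤ (out (K.add (sw N))).2) := by
  intro K p h
  induction h with
  | int m =>
    intro hb
    refine ⟨fun hc => Bool.noConfusion hc, fun _ => ?_⟩
    rw [bnd_int] at hb
    have hm : -M ≤ m ∧ m ≤ M := abs_le.mp hb
    rw [show (int m).add (sw N) = node [int (m + -N)] [int (m + N)] from by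
      rw [sw, add_int_node]; simp [add_int_int], out_node]
    simp only [List.map_cons, List.map_nil]
    rw [show out (int (m + -N)) = (m + -N, m + -N) from by rw [out],
        show out (int (m + N)) = (m + N, m + N) from by rw [out]]
    constructor
    · exact le_trans (lmax_le (by simp) (by intro a ha; simp at ha; omega)) le_rfl
    · exact le_lmin (by simp) (by intro a ha; simp at ha; omega)
  | @node L R p hL hR hLp hRp ihL ihR =>
    intro hb
    have hK : IsWT (node L R) (!p) := IsWT.node hL hR hLp hRp
    have hout := out_bnd (node L R)
    rw [show (node L R).add (sw N) =
        node ((L.map fun g => g.add (sw N)) ++ [(node L R).add (int (-N))])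
             ((R.map fun g => g.add (sw N)) ++ [(node L R).add (int N)]) from by
      rw [sw, add_node_node]; simp, out_node]
    simp only [List.map_append, List.map_map, List.map_cons, List.map_nil]
    have haddL := (out_add_int hK (-N)).2
    have haddR := (out_add_int hK N).1
    cases p with
    | true =>
      -- children are odd; node is even: prove the `false` clause
      refine ⟨fun hc => Bool.noConfusion hc, fun _ => ?_⟩
      constructor
      · refine lmax_le (by simp) ?_
        intro a ha
        rcases List.mem_append.mp ha with ha | ha
        · rcases List.mem_map.mp ha with ⟨g, hg, rfl⟩
          have := ((ihL g hg) (le_trans (bnd_left hg) hb)).1 rfl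
          simpa using this.2
        · simp at ha
          subst ha
          rw [haddL]
          have h2 := hout.2.2
          omega
      · refine le_lmin (by simp) ?_
        intro a ha
        rcases List.mem_append.mp ha with ha | ha
        · rcases List.mem_map.mp ha with ⟨g, hg, rfl⟩
          have := ((ihR g hg) (le_trans (bnd_right hg) hb)).1 rfl
          simpa using this.1
        · simp at ha
          subst ha
          rw [haddR]
          have h2 := hout.1.1
          omega
    | false =>
      -- children are even; node is odd: prove the `true` clause
      refine ⟨fun _ => ?_, fun hc => Bool.noConfusion hc⟩
      cases L with
      | nil => exact absurd rfl hL
      | cons x xs =>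
        cases R with
        | nil => exact absurd rfl hR
        | cons y ys =>
          constructor
          · refine le_trans ?_ (le_lmax (a := (out (x.add (sw N))).2)
              (List.mem_append_left _ (by simp)))
            have := ((ihL x (List.mem_cons_self))
              (le_trans (bnd_left (List.mem_cons_self)) hb)).2 rfl
            omega
          · refine le_trans (lmin_le (a := (out (y.add (sw N))).1)
              (List.mem_append_left _ (by simp))) ?_
            have := ((ihR y (List.mem_cons_self))
              (le_trans (bnd_right (List.mem_cons_self)) hb)).2 rfl
            omega

end WT

/-- if G ≲ H then G and H have the same parity. -/
theorem parity_of_le (G H : WT) (p q : Bool) (hG : WT.IsWT G p) (hH : WT.IsWT H q)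
    (h : WT.Le G H) : p = q := by
  by_contra hpq
  set M : ℤ := max (WT.bnd G) (WT.bnd H) with hM
  have hMG : WT.bnd G ≤ M := le_max_left _ _
  have hMH : WT.bnd H ≤ M := le_max_right _ _
  have hM0 : 0 ≤ M := le_trans (WT.bnd_nonneg G) hMG
  have hMN : M < M + 1 := lt_add_one M
  have kG := WT.key hMN hG hMG
  have kH := WT.key hMN hH hMH
  obtain ⟨h1, h2⟩ := h (WT.sw (M + 1)) ⟨true, WT.isWT_sw (M + 1)⟩
  simp only [WT.Lout, WT.Rout] at h1 h2
  cases p with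
  | false =>
    cases q with
    | false => exact hpq rfl
    | true =>
      have a1 := (kG.2 rfl).2
      have a2 := (kH.1 rfl).2
      omega
  | true =>
    cases q with
    | false =>
      have a1 := (kG.1 rfl).1
      have a2 := (kH.2 rfl).1
      omega
    | true => exact hpq rfl
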